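/- Fix ρ > 0 and 1/2 < α < 1, and suppose 2αρ/(2α−1) < π. Define F(t) = cot((2α−1)t) − cot(t) − 2 cot(ρ) for t ∈ (0, ρ/(2α−1)]. Then there exists a unique t₁ ∈ (0, ρ/(2α−1)) such that {t ∈ (0, ρ/(2α−1)] : F(t) ≥ 0} = (0, t₁]. -/

import Mathlib

open Real Set Filter

/-- Strict monotonicity of `y ↦ k y / √(1 - k² + k² y²)` on `[0, ∞)` for `0 < k < 1`. -/
lemma aux_phi_mono {k y₁ y₂ : ℝ} (hk0 : 0 < k) (hk1 : k < 1) (hy₁ : 0 ≤ y₁) (hy : y₁ < y₂) :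
    k * y₁ / Real.sqrt (1 - k^2 + k^2 * y₁^2) <
      k * y₂ / Real.sqrt (1 - k^2 + k^2 * y₂^2) := by
  have hD₁ : 0 < 1 - k^2 + k^2 * y₁^2 := by nlinarith
  have hD₂ : 0 < 1 - k^2 + k^2 * y₂^2 := by nlinarith
  have hs₁ := Real.sqrt_pos.mpr hD₁
  have hs₂ := Real.sqrt_pos.mpr hD₂
  rw [div_lt_div_iff₀ hs₁ hs₂]
  have key : y₁ * Real.sqrt (1 - k^2 + k^2 * y₂^2) <
      y₂ * Real.sqrt (1 - k^2 + k^2 * y₁^2) := by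
    have e₁ : y₁ * Real.sqrt (1 - k^2 + k^2 * y₂^2)
        = Real.sqrt (y₁^2 * (1 - k^2 + k^2 * y₂^2)) := by
      rw [Real.sqrt_mul (sq_nonneg y₁), Real.sqrt_sq hy₁]
    have e₂ : y₂ * Real.sqrt (1 - k^2 + k^2 * y₁^2)
        = Real.sqrt (y₂^2 * (1 - k^2 + k^2 * y₁^2)) := by
      rw [Real.sqrt_mul (sq_nonneg y₂), Real.sqrt_sq (by linarith)]
    rw [e₁, e₂]
    apply Real.sqrt_lt_sqrt (mul_nonneg (sq_nonneg _) hD₂.le)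
    nlinarith [mul_pos (mul_pos (sub_pos.mpr hy) (show (0:ℝ) < y₁ + y₂ by linarith))
      (show (0:ℝ) < 1 - k^2 by nlinarith)]
  calc k * y₁ * Real.sqrt (1 - k^2 + k^2 * y₂^2)
      = k * (y₁ * Real.sqrt (1 - k^2 + k^2 * y₂^2)) := by ring
    _ < k * (y₂ * Real.sqrt (1 - k^2 + k^2 * y₁^2)) := by
        exact mul_lt_mul_of_pos_left key hk0
    _ = k * y₂ * Real.sqrt (1 - k^2 + k^2 * y₁^2) := by ring

set_option maxHeartbeats 1000000

/-- For `ρ > 0`, `1/2 < α < 1` with `2αρ/(2α−1) < π`, the function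
`F(t) = cot((2α−1)t) − cot t − 2 cot ρ` on `(0, ρ/(2α−1)]` is nonnegative exactly on an
interval `(0, t₁]` for a unique `t₁ ∈ (0, ρ/(2α−1))`. -/
theorem cot_threshold_unique (ρ α : ℝ) (hρ : 0 < ρ) (hα1 : 1 / 2 < α) (hα2 : α < 1)
    (hassump : 2 * α * ρ / (2 * α - 1) < Real.pi) :
    ∃! t₁ : ℝ, t₁ ∈ Set.Ioo 0 (ρ / (2 * α - 1)) ∧
      {t ∈ Set.Ioc 0 (ρ / (2 * α - 1)) |
          0 ≤ Real.cot ((2 * α - 1) * t) - Real.cot t - 2 * Real.cot ρ} =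
        Set.Ioc 0 t₁ := by
  -- basic numeric facts, proved before abbreviating
  have hL0 : (0:ℝ) < 2 * α - 1 := by linarith
  have hLne : (2 * α - 1 : ℝ) ≠ 0 := ne_of_gt hL0
  have hL1 : (2 * α - 1 : ℝ) < 1 := by linarith
  have hb0 : 0 < ρ / (2 * α - 1) := div_pos hρ hL0
  have hLb : (2 * α - 1) * (ρ / (2 * α - 1)) = ρ := by field_simp
  have hsum : (1 + (2 * α - 1)) * (ρ / (2 * α - 1)) < π := by
    have e : (1 + (2 * α - 1)) * (ρ / (2 * α - 1)) = 2 * α * ρ / (2 * α - 1) := by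
      field_simp
      try ring
    rw [e]; exact hassump
  have hexp1 : (1 + (2 * α - 1)) * (ρ / (2 * α - 1))
      = (ρ / (2 * α - 1)) + (2 * α - 1) * (ρ / (2 * α - 1)) := by ring
  have hexp2 : (0:ℝ) < (1 - (2 * α - 1)) * (ρ / (2 * α - 1)) :=
    mul_pos (by linarith) hb0
  have hexp3 : (1 - (2 * α - 1)) * (ρ / (2 * α - 1))
      = (ρ / (2 * α - 1)) - (2 * α - 1) * (ρ / (2 * α - 1)) := by ring
  have hbπ : ρ / (2 * α - 1) < π := by
    have := mul_pos hL0 hb0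
    linarith [hexp1]
  have hρb : ρ < ρ / (2 * α - 1) := by linarith [hLb, hexp2, hexp3]
  have hρhalf : ρ < π / 2 := by linarith [hLb, hexp1, hexp2, hexp3, hsum]
  -- abbreviations
  set L : ℝ := 2 * α - 1 with hLdef
  set b : ℝ := ρ / L with hbdef
  clear_value b
  clear_value L
  have hkc0 : 0 < Real.cos ρ := Real.cos_pos_of_mem_Ioo ⟨by linarith, hρhalf⟩
  have hkc1 : Real.cos ρ < 1 := by
    have := Real.cos_lt_cos_of_nonneg_of_le_pi (le_refl (0:ℝ)) (by linarith) hρ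
    simpa using this
  have hsρ : 0 < Real.sin ρ := Real.sin_pos_of_pos_of_lt_pi hρ (by linarith [Real.pi_pos])
  -- bound on the arccos argument
  have hXsq : ∀ θ : ℝ, (Real.cos ρ * Real.cos θ)^2 < 1 := by
    intro θ
    have h1 : Real.cos θ ^ 2 ≤ 1 := by
      nlinarith [Real.cos_le_one θ, Real.neg_one_le_cos θ]
    nlinarith [sq_nonneg (Real.cos ρ), sq_nonneg (Real.cos θ)]
  have hXlow : ∀ θ : ℝ, -1 ≤ Real.cos ρ * Real.cos θ := by
    intro θ; nlinarith [hXsq θ, sq_nonneg (1 + Real.cos ρ * Real.cos θ)]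
  have hXhigh : ∀ θ : ℝ, Real.cos ρ * Real.cos θ ≤ 1 := by
    intro θ; nlinarith [hXsq θ, sq_nonneg (1 - Real.cos ρ * Real.cos θ)]
  have hXne1 : ∀ θ : ℝ, Real.cos ρ * Real.cos θ ≠ 1 := by
    intro θ h; have := hXsq θ; rw [h] at this; norm_num at this
  have hXne1' : ∀ θ : ℝ, Real.cos ρ * Real.cos θ ≠ -1 := by
    intro θ h; have := hXsq θ; rw [h] at this; norm_num at this
  -- the comparison function
  set g : ℝ → ℝ := fun t => Real.arccos (Real.cos ρ * Real.cos ((1 + L) * t)) - (ρ + (1 - L) * t)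
    with hgdef
  set q : ℝ → ℝ := fun t => Real.cos ρ * Real.sin ((1 + L) * t) /
      Real.sqrt (1 - Real.cos ρ ^ 2 + Real.cos ρ ^ 2 * Real.sin ((1 + L) * t) ^ 2) with hqdef
  clear_value q
  clear_value g
  have hg0 : g 0 = 0 := by
    simp only [hgdef]
    norm_num
    rw [Real.arccos_cos (by linarith) (by linarith)]
    ring
  -- continuity of g
  have hgc : Continuous g := by
    rw [hgdef]
    apply Continuous.sub
    · exact Real.continuous_arccos.comp
        (continuous_const.mul (Real.continuous_cos.comp (continuous_const.mul continuous_id)))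
    · exact continuous_const.add (continuous_const.mul continuous_id)
  -- the pointwise equivalence
  have key_iff : ∀ t ∈ Set.Ioc (0:ℝ) b,
      (0 ≤ Real.cot (L * t) - Real.cot t - 2 * Real.cot ρ ↔ g t ≤ 0) := by
    rintro t ⟨ht0, htb⟩
    have htπ : t < π := lt_of_le_of_lt htb hbπ
    have hst : 0 < Real.sin t := Real.sin_pos_of_pos_of_lt_pi ht0 htπ
    have hLtρ : L * t ≤ ρ := by
      have : L * t ≤ L * b := mul_le_mul_of_nonneg_left htb hL0.le
      linarith [hLb]
    have hsLt : 0 < Real.sin (L * t) :=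
      Real.sin_pos_of_pos_of_lt_pi (by positivity) (by linarith [Real.pi_pos])
    have hmul : 0 < Real.sin ρ * (Real.sin (L * t) * Real.sin t) := by positivity
    have prod : Real.sin ρ * (Real.sin (L * t) * Real.sin t) *
        (Real.cot (L * t) - Real.cot t - 2 * Real.cot ρ)
        = Real.cos ρ * Real.cos ((1 + L) * t) - Real.cos (ρ + (1 - L) * t) := by
      rw [Real.cot_eq_cos_div_sin, Real.cot_eq_cos_div_sin, Real.cot_eq_cos_div_sin,
        show (1 + L) * t = L * t + t by ring, show ρ + (1 - L) * t = ρ + (t - L * t) by ring,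
        Real.cos_add, Real.cos_add, Real.cos_sub, Real.sin_sub]
      field_simp
      ring
    have harc : Real.cos (Real.arccos (Real.cos ρ * Real.cos ((1 + L) * t)))
        = Real.cos ρ * Real.cos ((1 + L) * t) := Real.cos_arccos (hXlow _) (hXhigh _)
    have hmem1 : Real.arccos (Real.cos ρ * Real.cos ((1 + L) * t)) ∈ Set.Icc 0 π :=
      ⟨Real.arccos_nonneg _, Real.arccos_le_pi _⟩
    have hmem2 : ρ + (1 - L) * t ∈ Set.Icc 0 π := by
      have h5 : (1 - L) * t ≤ (1 - L) * b := mul_le_mul_of_nonneg_left htb (by linarith)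
      have h6 : (1 - L) * b = b - L * b := by ring
      have h7 : 0 < (1 - L) * t := mul_pos (by linarith) ht0
      exact ⟨by linarith, by linarith [hLb]⟩
    constructor
    · intro h
      have h2 : 0 ≤ Real.cos ρ * Real.cos ((1 + L) * t) - Real.cos (ρ + (1 - L) * t) := by
        rw [← prod]; exact mul_nonneg hmul.le h
      have h3 : Real.cos (ρ + (1 - L) * t) ≤
          Real.cos (Real.arccos (Real.cos ρ * Real.cos ((1 + L) * t))) := by
        rw [harc]; linarith
      have h4 := (Real.strictAntiOn_cos.le_iff_ge hmem2 hmem1).mp h3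
      simp only [hgdef]
      linarith [h4]
    · intro h
      have h4 : Real.arccos (Real.cos ρ * Real.cos ((1 + L) * t)) ≤ ρ + (1 - L) * t := by
        have h' := h; simp only [hgdef] at h'; linarith
      have h3 := (Real.strictAntiOn_cos.le_iff_ge hmem2 hmem1).mpr h4
      rw [harc] at h3
      have h2 : 0 ≤ Real.sin ρ * (Real.sin (L * t) * Real.sin t) *
          (Real.cot (L * t) - Real.cot t - 2 * Real.cot ρ) := by
        rw [prod]; linarith
      exact nonneg_of_mul_nonneg_right h2 hmul
  -- the derivative of g
  have hderiv : ∀ t : ℝ, HasDerivAt g ((1 + L) * q t - (1 - L)) t := by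
    intro t
    have hlin : HasDerivAt (fun t : ℝ => (1 + L) * t) (1 + L) t := by
      simpa using (hasDerivAt_id t).const_mul (1 + L)
    have hcos : HasDerivAt (fun t : ℝ => Real.cos ((1 + L) * t))
        (-Real.sin ((1 + L) * t) * (1 + L)) t := (Real.hasDerivAt_cos _).comp t hlin
    have hX : HasDerivAt (fun t : ℝ => Real.cos ρ * Real.cos ((1 + L) * t))
        (Real.cos ρ * (-Real.sin ((1 + L) * t) * (1 + L))) t := hcos.const_mul _
    have harccos := (Real.hasDerivAt_arccos (hXne1' _) (hXne1 _)).comp t hX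
    have hlin2 : HasDerivAt (fun t : ℝ => ρ + (1 - L) * t) (1 - L) t := by
      simpa using ((hasDerivAt_id t).const_mul (1 - L)).const_add ρ
    have hfull := harccos.sub hlin2
    have heq : -(1 / Real.sqrt (1 - (Real.cos ρ * Real.cos ((1 + L) * t)) ^ 2)) *
        (Real.cos ρ * (-Real.sin ((1 + L) * t) * (1 + L))) - (1 - L)
        = (1 + L) * q t - (1 - L) := by
      have hrw : 1 - (Real.cos ρ * Real.cos ((1 + L) * t)) ^ 2
          = 1 - Real.cos ρ ^ 2 + Real.cos ρ ^ 2 * Real.sin ((1 + L) * t) ^ 2 := by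
        linear_combination (-(Real.cos ρ ^ 2)) * Real.sin_sq_add_cos_sq ((1 + L) * t)
      rw [hrw]
      simp only [hqdef]
      rw [one_div, div_eq_mul_inv]
      ring
    rw [hgdef, ← heq]
    exact hfull
  -- g b > 0 (since F(b) < 0)
  have hgb : 0 < g b := by
    have hsb : 0 < Real.sin b := Real.sin_pos_of_pos_of_lt_pi hb0 hbπ
    have hsρb : 0 < Real.sin (ρ + b) := by
      apply Real.sin_pos_of_pos_of_lt_pi (by linarith)
      have : (1 + L) * b = b + L * b := by ring
      linarith [hLb, hsum]
    have hFb : Real.cot (L * b) - Real.cot b - 2 * Real.cot ρ < 0 := by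
      rw [hLb, Real.cot_eq_cos_div_sin, Real.cot_eq_cos_div_sin]
      have hid : Real.cos ρ / Real.sin ρ - Real.cos b / Real.sin b - 2 * (Real.cos ρ / Real.sin ρ)
          = -(Real.sin (ρ + b) / (Real.sin ρ * Real.sin b)) := by
        rw [Real.sin_add]; field_simp; ring
      rw [hid]
      have : 0 < Real.sin (ρ + b) / (Real.sin ρ * Real.sin b) := by positivity
      linarith
    by_contra h
    push_neg at h
    have := (key_iff b ⟨hb0, le_refl b⟩).mpr h
    linarith
  -- Claim 1: no return.
  have claim1 : ∀ t' t : ℝ, 0 < t' → t' < t → t ≤ b → g t ≤ 0 → g t' < 0 := by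
    intro t' t ht' htt' htb hgt
    by_contra hcon
    push_neg at hcon
    have htltb : t < b := by
      rcases lt_or_eq_of_le htb with h | h
      · exact h
      · exfalso; rw [h] at hgt; linarith
    obtain ⟨a, ha, hga⟩ := exists_hasDerivAt_eq_slope g (fun u => (1 + L) * q u - (1 - L))
      ht' hgc.continuousOn (fun x _ => hderiv x)
    obtain ⟨c, hc, hgc'⟩ := exists_hasDerivAt_eq_slope g (fun u => (1 + L) * q u - (1 - L))
      htt' hgc.continuousOn (fun x _ => hderiv x)
    obtain ⟨e, he, hge⟩ := exists_hasDerivAt_eq_slope g (fun u => (1 + L) * q u - (1 - L))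
      htltb hgc.continuousOn (fun x _ => hderiv x)
    -- slopes
    have h1L : (0:ℝ) < 1 + L := by linarith
    have hga' : 0 ≤ (1 + L) * q a - (1 - L) := by
      rw [hga, hg0]
      apply div_nonneg (by linarith) (by linarith)
    have hgc'' : (1 + L) * q c - (1 - L) ≤ 0 := by
      rw [hgc']
      apply div_nonpos_of_nonpos_of_nonneg (by linarith) (by linarith)
    have hge' : 0 < (1 + L) * q e - (1 - L) := by
      rw [hge]
      apply div_pos (by linarith) (by linarith)
    have hqca : q c ≤ q a := by
      have h' : (1 + L) * q c ≤ (1 + L) * q a := by linarith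
      exact le_of_mul_le_mul_left h' h1L
    have hqce : q c < q e := by
      have h' : (1 + L) * q c < (1 + L) * q e := by linarith
      exact lt_of_mul_lt_mul_left h' h1L.le
    -- positions of the angles
    have hac : a < c := lt_trans ha.2 hc.1
    have hce : c < e := lt_trans hc.2 he.1
    have hapos : 0 < a := ha.1
    have heb : e < b := he.2
    have hθa : 0 < (1 + L) * a := mul_pos h1L hapos
    have hθac : (1 + L) * a < (1 + L) * c := by
      exact mul_lt_mul_of_pos_left hac h1L
    have hθce : (1 + L) * c < (1 + L) * e := by
      exact mul_lt_mul_of_pos_left hce h1L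
    have hθe : (1 + L) * e < π := by
      have := mul_lt_mul_of_pos_left heb h1L
      linarith [hsum]
    have hsina : 0 ≤ Real.sin ((1 + L) * a) :=
      (Real.sin_pos_of_pos_of_lt_pi hθa (by linarith)).le
    have hsine : 0 ≤ Real.sin ((1 + L) * e) :=
      (Real.sin_pos_of_pos_of_lt_pi (by linarith) hθe).le
    have hsinc : 0 ≤ Real.sin ((1 + L) * c) :=
      (Real.sin_pos_of_pos_of_lt_pi (by linarith) (by linarith)).le
    -- q comparisons give sin comparisons
    have hsinca : Real.sin ((1 + L) * c) ≤ Real.sin ((1 + L) * a) := by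
      by_contra hcon2
      push_neg at hcon2
      have := aux_phi_mono hkc0 hkc1 hsina hcon2
      simp only [hqdef] at hqca
      linarith
    have hsince : Real.sin ((1 + L) * c) < Real.sin ((1 + L) * e) := by
      rcases lt_trichotomy (Real.sin ((1 + L) * c)) (Real.sin ((1 + L) * e)) with h | h | h
      · exact h
      · exfalso
        have heq : q c = q e := by simp only [hqdef]; rw [h]
        linarith
      · exfalso
        have := aux_phi_mono hkc0 hkc1 hsine h
        simp only [hqdef] at hqce
        linarith
    -- derive a contradiction using the shape of sin on (0, π)
    have hc2 : π / 2 < (1 + L) * c := by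
      by_contra hcon3
      push_neg at hcon3
      have := Real.strictMonoOn_sin
        (a := (1 + L) * a) (b := (1 + L) * c)
        ⟨by linarith [Real.pi_pos], by linarith⟩
        ⟨by linarith [Real.pi_pos], hcon3⟩ hθac
      linarith
    have hfin : Real.sin ((1 + L) * e) < Real.sin ((1 + L) * c) := by
      have h1 : Real.sin ((1 + L) * e) = Real.sin (π - (1 + L) * e) := (Real.sin_pi_sub _).symm
      have h2 : Real.sin ((1 + L) * c) = Real.sin (π - (1 + L) * c) := (Real.sin_pi_sub _).symm
      rw [h1, h2]
      apply Real.strictMonoOn_sin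
        ⟨by linarith, by linarith⟩ ⟨by linarith, by linarith⟩ (by linarith)
    linarith
  -- g is negative somewhere near 0
  have hnear : ∃ t0 : ℝ, t0 ∈ Set.Ioo 0 b ∧ g t0 < 0 := by
    have hd0 : HasDerivAt g (-(1 - L)) 0 := by
      have h := hderiv 0
      have hq0 : q 0 = 0 := by simp [hqdef]
      rw [hq0] at h
      simpa using h
    have hts := hasDerivAt_iff_tendsto_slope.mp hd0
    have hev : ∀ᶠ u in nhdsWithin (0:ℝ) {(0:ℝ)}ᶜ, slope g 0 u < 0 :=
      Filter.Tendsto.eventually_lt_const (by linarith) hts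
    have hev2 : ∀ᶠ u in nhdsWithin (0:ℝ) (Set.Ioi 0), slope g 0 u < 0 :=
      hev.filter_mono (nhdsWithin_mono 0 (fun x hx => by
        simp only [Set.mem_compl_iff, Set.mem_singleton_iff]
        exact ne_of_gt hx))
    have hev3 : ∀ᶠ u in nhdsWithin (0:ℝ) (Set.Ioi 0), u ∈ Set.Ioo (0:ℝ) b :=
      Ioo_mem_nhdsGT_of_mem ⟨le_refl 0, hb0⟩
    obtain ⟨t0, hsl, ht0mem⟩ := (hev2.and hev3).exists
    refine ⟨t0, ht0mem, ?_⟩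
    have ht00 : 0 < t0 := ht0mem.1
    rw [slope_def_field, hg0] at hsl
    have hsl' : (g t0 - 0) / (t0 - 0) < 0 := by simpa using hsl
    rcases div_neg_iff.mp hsl' with ⟨h1, h2⟩ | ⟨h1, h2⟩
    · linarith
    · linarith
  obtain ⟨t0, ht0mem, hgt0⟩ := hnear
  -- the threshold
  set T : Set ℝ := {t : ℝ | t ∈ Set.Ioc 0 b ∧ g t ≤ 0} with hTdef
  have hTne : T.Nonempty := ⟨t0, ⟨ht0mem.1, ht0mem.2.le⟩, hgt0.le⟩
  have hTbdd : BddAbove T := ⟨b, fun x hx => hx.1.2⟩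
  set t₁ : ℝ := sSup T with ht₁def
  clear_value t₁
  have ht₁b : t₁ ≤ b := by
    rw [ht₁def]; exact csSup_le hTne (fun x hx => hx.1.2)
  have ht₁0 : 0 < t₁ := by
    rw [ht₁def]
    exact lt_of_lt_of_le ht0mem.1 (le_csSup hTbdd ⟨⟨ht0mem.1, ht0mem.2.le⟩, hgt0.le⟩)
  have hsub : ∀ t' ∈ Set.Ioo (0:ℝ) t₁, g t' < 0 := by
    rintro t' ⟨h1, h2⟩
    rw [ht₁def] at h2
    obtain ⟨t, htT, htt'⟩ := exists_lt_of_lt_csSup hTne h2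
    exact claim1 t' t h1 htt' htT.1.2 htT.2
  have hgt₁ : g t₁ ≤ 0 := by
    have hcl : IsClosed {t : ℝ | g t ≤ 0} := isClosed_le hgc continuous_const
    have hsub2 : Set.Ioo (0:ℝ) t₁ ⊆ {t : ℝ | g t ≤ 0} := fun x hx => (hsub x hx).le
    have hccl : closure (Set.Ioo (0:ℝ) t₁) ⊆ {t : ℝ | g t ≤ 0} :=
      hcl.closure_subset_iff.mpr hsub2
    apply hccl
    rw [closure_Ioo (ne_of_lt ht₁0)]
    exact ⟨ht₁0.le, le_refl t₁⟩
  have ht₁ltb : t₁ < b := by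
    rcases lt_or_eq_of_le ht₁b with h | h
    · exact h
    · exfalso; rw [h] at hgt₁; linarith
  -- set equality
  have hseteq : {t ∈ Set.Ioc 0 b |
      0 ≤ Real.cot (L * t) - Real.cot t - 2 * Real.cot ρ} = Set.Ioc 0 t₁ := by
    ext t
    simp only [Set.mem_setOf_eq, Set.mem_Ioc]
    constructor
    · rintro ⟨⟨ht0, htb⟩, hF⟩
      have hgt : g t ≤ 0 := (key_iff t ⟨ht0, htb⟩).mp hF
      refine ⟨ht0, ?_⟩
      rw [ht₁def]
      exact le_csSup hTbdd ⟨⟨ht0, htb⟩, hgt⟩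
    · rintro ⟨ht0, htt₁⟩
      have htb : t ≤ b := le_trans htt₁ ht₁b
      have hgt : g t ≤ 0 := by
        rcases lt_or_eq_of_le htt₁ with h | h
        · exact (hsub t ⟨ht0, h⟩).le
        · rw [h]; exact hgt₁
      exact ⟨⟨ht0, htb⟩, (key_iff t ⟨ht0, htb⟩).mpr hgt⟩
  refine ⟨t₁, ⟨⟨ht₁0, ht₁ltb⟩, hseteq⟩, ?_⟩
  rintro y ⟨⟨hy0, hyb⟩, hyeq⟩
  have heq : Set.Ioc (0:ℝ) y = Set.Ioc 0 t₁ := by rw [← hyeq, hseteq]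
  have h1 : y ≤ t₁ := by
    have : y ∈ Set.Ioc (0:ℝ) t₁ := heq ▸ (⟨hy0, le_refl y⟩ : y ∈ Set.Ioc (0:ℝ) y)
    exact this.2
  have h2 : t₁ ≤ y := by
    have : t₁ ∈ Set.Ioc (0:ℝ) y := heq.symm ▸ (⟨ht₁0, le_refl t₁⟩ : t₁ ∈ Set.Ioc (0:ℝ) t₁)
    exact this.2
  exact le_antisymm h1 h2
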